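/- arXiv:2004.14184 — 7 statements merged into one kernel-verified Lean document; each statement's English description precedes it below -/
import Mathlib

section
/- Let Σ be a real (n+1)×(n+1) positive definite Toeplitz matrix, R = diag(r_1,…,r_{n+1}) with 0 < r_1 ≤ r_2 ≤ … ≤ r_{n+1}, and let b = (b_0,…,b_n)ᵀ ∈ ℝ^{n+1} be a nonzero vector satisfying (Σ + R) b = c·e_1 for some real c, where e_1 = (1,0,…,0)ᵀ. Then every root of the polynomial b(z) = b_0 + b_1 z^{−1} + … + b_n z^{−n} (equivalently, every zero of b_0 z^n + b_1 z^{n−1} + … + b_n) lies strictly inside the unit circle. -/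
open Matrix

/-- A matrix is Toeplitz if its entries depend only on the difference of indices. -/
def IsToeplitz {n : ℕ} (M : Matrix (Fin (n+1)) (Fin (n+1)) ℝ) : Prop :=
  ∀ i j k l : Fin (n+1), (i : ℤ) - (j : ℤ) = (k : ℤ) - (l : ℤ) → M i j = M k l

noncomputable def Fq {m : ℕ} (M : Matrix (Fin m) (Fin m) ℝ) (x y : Fin m → ℂ) : ℂ :=
  ∑ k, ∑ l, (starRingEnd ℂ) (x k) * ((M k l : ℂ) * y l)

lemma Fq_sub_left {m : ℕ} (M : Matrix (Fin m) (Fin m) ℝ) (x y w : Fin m → ℂ) :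
    Fq M (x - y) w = Fq M x w - Fq M y w := by
  simp [Fq, sub_mul, Finset.sum_sub_distrib]

lemma Fq_sub_right {m : ℕ} (M : Matrix (Fin m) (Fin m) ℝ) (x y w : Fin m → ℂ) :
    Fq M w (x - y) = Fq M w x - Fq M w y := by
  simp [Fq, mul_sub, Finset.sum_sub_distrib]

lemma Fq_smul_left {m : ℕ} (M : Matrix (Fin m) (Fin m) ℝ) (a : ℂ) (x w : Fin m → ℂ) :
    Fq M (a • x) w = (starRingEnd ℂ) a * Fq M x w := by
  simp [Fq, Finset.mul_sum]; ring_nf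

lemma Fq_smul_right {m : ℕ} (M : Matrix (Fin m) (Fin m) ℝ) (a : ℂ) (x w : Fin m → ℂ) :
    Fq M w (a • x) = a * Fq M w x := by
  simp [Fq, Finset.mul_sum]; ring_nf
  exact Finset.sum_congr rfl fun k _ => Finset.sum_congr rfl fun l _ => by ring

lemma Fq_add_matrix {m : ℕ} (M N : Matrix (Fin m) (Fin m) ℝ) (x y : Fin m → ℂ) :
    Fq (M + N) x y = Fq M x y + Fq N x y := by
  simp [Fq, add_mul, mul_add, Finset.sum_add_distrib]

lemma Fq_conj {m : ℕ} {M : Matrix (Fin m) (Fin m) ℝ} (hsym : ∀ k l, M k l = M l k)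
    (x y : Fin m → ℂ) : Fq M x y = (starRingEnd ℂ) (Fq M y x) := by
  unfold Fq
  simp only [map_sum, _root_.map_mul, Complex.conj_conj, Complex.conj_ofReal]
  rw [Finset.sum_comm]
  exact Finset.sum_congr rfl fun k _ => Finset.sum_congr rfl fun l _ => by
    rw [hsym k l]; ring

lemma Fq_re_nonneg {m : ℕ} {M : Matrix (Fin m) (Fin m) ℝ} (hM : M.PosSemidef)
    (x : Fin m → ℂ) : 0 ≤ (Fq M x x).re := by
  have h1 : (Fq M x x).re
      = (fun i => (x i).re) ⬝ᵥ (M *ᵥ fun i => (x i).re)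
        + (fun i => (x i).im) ⬝ᵥ (M *ᵥ fun i => (x i).im) := by
    simp only [Fq, dotProduct, mulVec, Complex.re_sum, Finset.mul_sum, ← Finset.sum_add_distrib]
    refine Finset.sum_congr rfl fun k _ => ?_
    refine Finset.sum_congr rfl fun l _ => ?_
    simp [Complex.mul_re, Complex.mul_im]; try ring
  rw [h1]
  have h2 := (Matrix.posSemidef_iff_dotProduct_mulVec.mp hM).2 (fun i => ((x i).re : ℝ))
  have h3 := (Matrix.posSemidef_iff_dotProduct_mulVec.mp hM).2 (fun i => ((x i).im : ℝ))
  simp only [star_trivial] at h2 h3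
  positivity


/-- Proposition 1: minimum phase property of the regularized Yule-Walker solution
with diagonal regularization. -/
theorem regularized_yule_walker_min_phase_DI {n : ℕ}
    (S : Matrix (Fin (n+1)) (Fin (n+1)) ℝ)
    (hpd : S.PosDef) (htoep : IsToeplitz S)
    (r : Fin (n+1) → ℝ)
    (hrpos : ∀ k, 0 < r k) (hrmono : Monotone r)
    (b : Fin (n+1) → ℝ) (hb : b ≠ 0) (c : ℝ)
    (hYW : (S + Matrix.diagonal r) *ᵥ b = c • ((Pi.single (0 : Fin (n+1)) (1 : ℝ)) : Fin (n+1) → ℝ)) :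
    ∀ z : ℂ, (∑ k : Fin (n+1), (b k : ℂ) * z ^ (n - (k : ℕ))) = 0 → ‖z‖ < 1 := by
  intro z hz
  by_contra hz1
  push_neg at hz1
  set M := S + Matrix.diagonal r with hMdef
  have hMpd : M.PosDef := hpd.add_posSemidef (Matrix.PosSemidef.diagonal fun i => (hrpos i).le)
  have hMsym : ∀ k l, M k l = M l k := by
    intro k l
    have := hMpd.isHermitian
    rw [Matrix.IsHermitian] at this
    conv_rhs => rw [← this]
    simp [Matrix.conjTranspose_apply]
  -- the deconvolution vectors
  set bb : ℕ → ℂ := fun j => if h : j < n+1 then (b ⟨j, h⟩ : ℂ) else 0 with hbb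
  set q : ℕ → ℂ := fun mm => ∑ j ∈ Finset.range (mm+1), bb j * z ^ (mm - j) with hq
  set u : Fin (n+1) → ℂ := fun k => q k.val with hu
  set v : Fin (n+1) → ℂ := fun k => ∑ j ∈ Finset.range k.val, bb j * z ^ (k.val - 1 - j) with hv
  have hqn : q n = 0 := by
    show (∑ j ∈ Finset.range (n+1), bb j * z ^ (n - j)) = 0
    rw [← Fin.sum_univ_eq_sum_range (fun j => bb j * z ^ (n - j)) (n+1), ← hz]
    refine Finset.sum_congr rfl fun k _ => ?_
    simp [hbb, k.isLt]
    intro h; exact absurd k.isLt (by omega)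
  have hv0 : v 0 = 0 := by simp [hv]
  have hvsucc : ∀ k : Fin n, v k.succ = q k.val := by
    intro k
    simp [hv, hq, Fin.val_succ, Nat.add_sub_cancel]
  have hucast : ∀ k : Fin n, u k.castSucc = q k.val := fun k => rfl
  have hulast : u (Fin.last n) = 0 := hqn
  have hbuv : ∀ k : Fin (n+1), (b k : ℂ) = u k - z * v k := by
    intro k
    have h1 : u k = (∑ j ∈ Finset.range k.val, bb j * z ^ (k.val - j)) + bb k.val := by
      rw [hu, hq]
      simp [Finset.sum_range_succ]
    have h2 : z * v k = ∑ j ∈ Finset.range k.val, bb j * z ^ (k.val - j) := by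
      rw [hv, Finset.mul_sum]
      refine Finset.sum_congr rfl fun j hj => ?_
      rw [Finset.mem_range] at hj
      have : k.val - j = (k.val - 1 - j) + 1 := by omega
      rw [this, pow_succ]
      ring
    rw [h1, h2]
    simp [hbb, k.isLt]
    intro h; exact absurd k.isLt (by omega)
  have hB : (fun k : Fin (n+1) => (b k : ℂ)) = u - z • v := by
    funext k
    simp [hbuv k]
  -- Yule-Walker consequences
  have hMvb : ∀ k : Fin (n+1), (∑ l, (M k l : ℂ) * (b l : ℂ)) = if k = 0 then (c : ℂ) else 0 := by
    intro k
    have h0 : (M *ᵥ b) k = c * (if k = 0 then (1:ℝ) else 0) := by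
      rw [hYW]; simp [Pi.single_apply]
    have h1 : ((M *ᵥ b) k : ℂ) = ∑ l, (M k l : ℂ) * (b l : ℂ) := by
      simp [Matrix.mulVec, dotProduct]
    rw [← h1, h0]
    by_cases h : k = 0 <;> simp [h]
  have hFxB : ∀ x : Fin (n+1) → ℂ, Fq M x (fun k => (b k : ℂ)) = (starRingEnd ℂ) (x 0) * c := by
    intro x
    unfold Fq
    simp only [← Finset.mul_sum, hMvb]
    rw [Fintype.sum_eq_single (0 : Fin (n+1))]
    · simp
    · intro k hk; simp [hk]
  have hposR : 0 < c * b 0 := by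
    have h1 := (Matrix.posDef_iff_dotProduct_mulVec.mp hMpd).2 hb
    rw [star_trivial, hYW] at h1
    simpa [dotProduct, Pi.single_apply, mul_ite, mul_comm] using h1
  -- sesquilinear expansion
  have hFvB : Fq M v (fun k => (b k : ℂ)) = 0 := by
    rw [hFxB v, hv0]; simp
  have hFBB : Fq M (fun k => (b k : ℂ)) (fun k => (b k : ℂ)) = ((c * b 0 : ℝ) : ℂ) := by
    rw [hFxB]; rw [Complex.conj_ofReal]; push_cast; ring
  have hvu : Fq M v u = z * Fq M v v := by
    have h := hFvB
    rw [hB, Fq_sub_right, Fq_smul_right] at h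
    linear_combination h
  have hvv_conj : Fq M v v = (starRingEnd ℂ) (Fq M v v) := Fq_conj hMsym v v
  have huv : Fq M u v = (starRingEnd ℂ) z * Fq M v v := by
    rw [Fq_conj hMsym u v, hvu, _root_.map_mul, ← hvv_conj]
  have hexp : ((c * b 0 : ℝ) : ℂ) = Fq M u u - (z * (starRingEnd ℂ) z) * Fq M v v := by
    rw [← hFBB, hB, Fq_sub_left, Fq_sub_right, Fq_sub_right, Fq_smul_left, Fq_smul_left,
      Fq_smul_right, Fq_smul_right, hvu, huv]
    ring
  -- split M into Toeplitz and diagonal parts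
  have hsplit : ∀ x : Fin (n+1) → ℂ, Fq M x x = Fq S x x + Fq (Matrix.diagonal r) x x := by
    intro x; rw [hMdef]; exact Fq_add_matrix S _ x x
  -- Toeplitz shift invariance
  have hSuu : Fq S u u = ∑ k : Fin n, ∑ l : Fin n,
      (starRingEnd ℂ) (q k.val) * ((S k.castSucc l.castSucc : ℂ) * q l.val) := by
    unfold Fq
    rw [Fin.sum_univ_castSucc]
    have hlast : (∑ l, (starRingEnd ℂ) (u (Fin.last n)) * ((S (Fin.last n) l : ℂ) * u l)) = 0 := by
      simp [hulast]
    rw [hlast, add_zero]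
    refine Finset.sum_congr rfl fun k _ => ?_
    rw [Fin.sum_univ_castSucc]
    simp [hulast, hucast]
  have hSvv : Fq S v v = ∑ k : Fin n, ∑ l : Fin n,
      (starRingEnd ℂ) (q k.val) * ((S k.succ l.succ : ℂ) * q l.val) := by
    unfold Fq
    rw [Fin.sum_univ_succ]
    have h0 : (∑ l, (starRingEnd ℂ) (v 0) * ((S 0 l : ℂ) * v l)) = 0 := by
      simp [hv0]
    rw [h0, zero_add]
    refine Finset.sum_congr rfl fun k _ => ?_
    rw [Fin.sum_univ_succ]
    simp [hv0, hvsucc]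
  have hS_shift : Fq S u u = Fq S v v := by
    rw [hSuu, hSvv]
    refine Finset.sum_congr rfl fun k _ => Finset.sum_congr rfl fun l _ => ?_
    rw [htoep k.castSucc l.castSucc k.succ l.succ (by
      simp only [Fin.coe_castSucc, Fin.val_succ]
      push_cast; ring)]
  -- diagonal part
  have hdiag : ∀ x : Fin (n+1) → ℂ, Fq (Matrix.diagonal r) x x
      = ∑ k, ((r k : ℂ) * ((starRingEnd ℂ) (x k) * x k)) := by
    intro x
    unfold Fq
    refine Finset.sum_congr rfl fun k _ => ?_
    rw [Fintype.sum_eq_single k]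
    · rw [Matrix.diagonal_apply_eq]; ring
    · intro l hl
      rw [Matrix.diagonal_apply_ne r (Ne.symm hl)]
      simp
  have hterm : ∀ (t : ℝ) (w : ℂ), ((t : ℂ) * ((starRingEnd ℂ) w * w)).re = t * Complex.normSq w := by
    intro t w
    have : (starRingEnd ℂ) w * w = ((Complex.normSq w : ℝ) : ℂ) := by
      rw [mul_comm]; exact Complex.mul_conj w
    rw [this, ← Complex.ofReal_mul]
    simp
  have hdu : (Fq (Matrix.diagonal r) u u).re
      = ∑ k : Fin n, r k.castSucc * Complex.normSq (q k.val) := by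
    rw [hdiag, Complex.re_sum, Fin.sum_univ_castSucc]
    have : ((r (Fin.last n) : ℂ) * ((starRingEnd ℂ) (u (Fin.last n)) * u (Fin.last n))).re = 0 := by
      simp [hulast]
    rw [this, add_zero]
    exact Finset.sum_congr rfl fun k _ => hterm _ _
  have hdv : (Fq (Matrix.diagonal r) v v).re
      = ∑ k : Fin n, r k.succ * Complex.normSq (q k.val) := by
    rw [hdiag, Complex.re_sum, Fin.sum_univ_succ]
    have h0 : ((r 0 : ℂ) * ((starRingEnd ℂ) (v 0) * v 0)).re = 0 := by simp [hv0]
    rw [h0, zero_add]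
    refine Finset.sum_congr rfl fun k _ => ?_
    rw [hvsucc k]
    exact hterm _ _
  have hdle : (Fq (Matrix.diagonal r) u u).re ≤ (Fq (Matrix.diagonal r) v v).re := by
    rw [hdu, hdv]
    refine Finset.sum_le_sum fun k _ => ?_
    exact mul_le_mul_of_nonneg_right (hrmono (Fin.castSucc_lt_succ (i := k)).le) (Complex.normSq_nonneg _)
  have huu_le : (Fq M u u).re ≤ (Fq M v v).re := by
    rw [hsplit u, hsplit v, Complex.add_re, Complex.add_re, hS_shift]
    exact (add_le_add_iff_left _).2 hdle
  have hvvre : 0 ≤ (Fq M v v).re := Fq_re_nonneg hMpd.posSemidef v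
  -- conclusion
  have hre := congrArg Complex.re hexp
  rw [Complex.sub_re, Complex.ofReal_re, Complex.mul_conj, Complex.re_ofReal_mul] at hre
  have h1 : 1 ≤ Complex.normSq z := by
    rw [Complex.normSq_eq_norm_sq]
    nlinarith
  nlinarith [mul_nonneg (sub_nonneg.2 h1) hvvre]
end

section
/- Let F be the (n+1)×(n+1) lower bidiagonal matrix with 1's on the diagonal and −1's on the first subdiagonal, and D = (β − β²)^{−1} · diag(1, β^{−1}, β^{−2}, …, β^{−n}) for β ∈ (0,1). Then the matrix K_{TC} with entries [K_{TC}]_{ts} = β^{max(t,s)} − β^{n+2} for t,s = 1,…,n+1 satisfies K_{TC} = (F D Fᵀ)^{−1}. -/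
open Matrix

/-- The first-difference matrix: 1's on the diagonal and -1's on the first subdiagonal. -/
def diffMatrix (n : ℕ) : Matrix (Fin (n+1)) (Fin (n+1)) ℝ :=
  fun i j => if i = j then 1 else if (j : ℕ) + 1 = (i : ℕ) then -1 else 0

lemma sum_coe_eq {n : ℕ} (f : Fin (n+1) → ℝ) (m : ℕ) :
    ∑ k : Fin (n+1), (if m = (k:ℕ) then f k else 0)
      = if h : m < n+1 then f ⟨m, h⟩ else 0 := by
  by_cases h : m < n+1
  · rw [dif_pos h, Finset.sum_eq_single (⟨m, h⟩ : Fin (n+1))]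
    · simp
    · intro b _ hb
      rw [if_neg]
      intro hc
      exact hb (by simp [Fin.ext_iff]; omega)
    · simp
  · rw [dif_neg h]
    apply Finset.sum_eq_zero
    intro k _
    rw [if_neg]
    have := k.isLt
    omega

lemma diff_col_sum {n : ℕ} (f : Fin (n+1) → ℝ) (i : Fin (n+1)) :
    ∑ k : Fin (n+1), diffMatrix n k i * f k
      = f i - (if h : (i:ℕ)+1 < n+1 then f ⟨(i:ℕ)+1, h⟩ else 0) := by
  have key : ∀ k : Fin (n+1), diffMatrix n k i * f k
      = (if (i:ℕ) = (k:ℕ) then f k else 0) - (if (i:ℕ)+1 = (k:ℕ) then f k else 0) := by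
    intro k
    unfold diffMatrix
    have : (k = i) ↔ ((i:ℕ) = (k:ℕ)) := by rw [Fin.ext_iff]; omega
    split_ifs <;> simp_all
  rw [Finset.sum_congr rfl (fun k _ => key k), Finset.sum_sub_distrib,
    sum_coe_eq, sum_coe_eq]
  simp [i.isLt]

lemma diff_row_sum {n : ℕ} (f : Fin (n+1) → ℝ) (j : Fin (n+1)) :
    ∑ l : Fin (n+1), f l * diffMatrix n l j
      = f j - (if h : (j:ℕ)+1 < n+1 then f ⟨(j:ℕ)+1, h⟩ else 0) := by
  have : ∀ l : Fin (n+1), f l * diffMatrix n l j = diffMatrix n l j * f l := fun l => mul_comm _ _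
  rw [Finset.sum_congr rfl (fun l _ => this l)]
  exact diff_col_sum f j

lemma TC_key {n : ℕ} (β : ℝ) (hβ : β ∈ Set.Ioo (0:ℝ) 1)
    (K : Matrix (Fin (n+1)) (Fin (n+1)) ℝ)
    (hK : ∀ t s : Fin (n+1), K t s = β ^ (max (t : ℕ) (s : ℕ) + 1) - β ^ (n + 2)) :
    (diffMatrix n)ᵀ * K * diffMatrix n
      = Matrix.diagonal (fun i : Fin (n+1) => (β - β ^ 2) * β ^ (i : ℕ)) := by
  ext i j
  have hA : ∀ l : Fin (n+1), ((diffMatrix n)ᵀ * K) i l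
      = K i l - (if h : (i:ℕ)+1 < n+1 then K ⟨(i:ℕ)+1, h⟩ l else 0) := by
    intro l
    rw [Matrix.mul_apply]
    simp only [Matrix.transpose_apply]
    exact diff_col_sum (fun k => K k l) i
  rw [Matrix.mul_apply]
  rw [Finset.sum_congr rfl (fun l _ => by rw [hA l])]
  rw [diff_row_sum (fun l => K i l - (if h : (i:ℕ)+1 < n+1 then K ⟨(i:ℕ)+1, h⟩ l else 0)) j]
  simp only [Matrix.diagonal_apply, hK]
  have hi := i.isLt
  have hj := j.isLt
  rcases lt_trichotomy (i:ℕ) (j:ℕ) with hij | hij | hij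
  · have hne : ¬ i = j := by simp only [Fin.ext_iff]; omega
    have h1 : (i:ℕ)+1 < n+1 := by omega
    have e1 : (i:ℕ) ⊔ (j:ℕ) = (j:ℕ) := by omega
    have e2 : ((i:ℕ)+1) ⊔ (j:ℕ) = (j:ℕ) := by omega
    rw [if_neg hne]
    by_cases h2 : (j:ℕ)+1 < n+1
    · have e3 : (i:ℕ) ⊔ ((j:ℕ)+1) = (j:ℕ)+1 := by omega
      have e4 : ((i:ℕ)+1) ⊔ ((j:ℕ)+1) = (j:ℕ)+1 := by omega
      rw [dif_pos h1, dif_pos h2, dif_pos h1, e1, e2, e3, e4]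
      ring
    · rw [dif_pos h1, dif_neg h2, e1, e2]
      ring
  · have hij' : i = j := Fin.ext hij
    subst hij'
    have e1 : (i:ℕ) ⊔ (i:ℕ) = (i:ℕ) := by omega
    rw [if_pos rfl]
    by_cases h1 : (i:ℕ)+1 < n+1
    · have e2 : ((i:ℕ)+1) ⊔ (i:ℕ) = (i:ℕ)+1 := by omega
      have e3 : (i:ℕ) ⊔ ((i:ℕ)+1) = (i:ℕ)+1 := by omega
      have e4 : ((i:ℕ)+1) ⊔ ((i:ℕ)+1) = (i:ℕ)+1 := by omega
      rw [dif_pos h1, dif_pos h1, dif_pos h1, e1, e2, e3, e4]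
      ring
    · have hn : (i:ℕ) = n := by omega
      rw [dif_neg h1, dif_neg h1, e1, hn]
      ring
  · have hne : ¬ i = j := by simp only [Fin.ext_iff]; omega
    have h2 : (j:ℕ)+1 < n+1 := by omega
    have e1 : (i:ℕ) ⊔ (j:ℕ) = (i:ℕ) := by omega
    have e3 : (i:ℕ) ⊔ ((j:ℕ)+1) = (i:ℕ) := by omega
    rw [if_neg hne]
    by_cases h1 : (i:ℕ)+1 < n+1
    · have e2 : ((i:ℕ)+1) ⊔ (j:ℕ) = (i:ℕ)+1 := by omega
      have e4 : ((i:ℕ)+1) ⊔ ((j:ℕ)+1) = (i:ℕ)+1 := by omega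
      rw [dif_pos h1, dif_pos h2, dif_pos h1, e1, e2, e3, e4]
      ring
    · rw [dif_neg h1, dif_pos h2, dif_neg h1, e1, e3]
      ring

/-- Lower triangular matrix of all ones: the inverse of `diffMatrix`. -/
def lowerOnes (n : ℕ) : Matrix (Fin (n+1)) (Fin (n+1)) ℝ :=
  fun i j => if (j:ℕ) ≤ (i:ℕ) then 1 else 0

lemma diff_mul_sum {n : ℕ} (f : Fin (n+1) → ℝ) (i : Fin (n+1)) :
    ∑ k : Fin (n+1), diffMatrix n i k * f k
      = f i - (if 1 ≤ (i:ℕ) then f ⟨(i:ℕ)-1, Nat.lt_of_le_of_lt (Nat.sub_le _ _) i.isLt⟩ else 0) := by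
  have key : ∀ k : Fin (n+1), diffMatrix n i k * f k
      = (if (i:ℕ) = (k:ℕ) then f k else 0) - (if (k:ℕ)+1 = (i:ℕ) then f k else 0) := by
    intro k
    unfold diffMatrix
    have : (i = k) ↔ ((i:ℕ) = (k:ℕ)) := by rw [Fin.ext_iff]
    split_ifs <;> simp_all
  rw [Finset.sum_congr rfl (fun k _ => key k), Finset.sum_sub_distrib, sum_coe_eq]
  by_cases h1 : 1 ≤ (i:ℕ)
  · have : ∀ k : Fin (n+1), (if (k:ℕ)+1 = (i:ℕ) then f k else 0)
        = (if (i:ℕ)-1 = (k:ℕ) then f k else 0) := by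
      intro k
      exact if_congr (by omega) rfl rfl
    rw [Finset.sum_congr rfl (fun k _ => this k), sum_coe_eq, if_pos h1,
      dif_pos (Nat.lt_of_le_of_lt (Nat.sub_le (i:ℕ) 1) i.isLt), dif_pos i.isLt]
  · have : ∀ k : Fin (n+1), (if (k:ℕ)+1 = (i:ℕ) then f k else 0) = 0 := by
      intro k
      rw [if_neg]
      omega
    rw [Finset.sum_congr rfl (fun k _ => this k), Finset.sum_const_zero, if_neg h1,
      dif_pos i.isLt]

lemma diff_mul_lowerOnes {n : ℕ} : diffMatrix n * lowerOnes n = 1 := by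
  ext i j
  rw [Matrix.mul_apply, diff_mul_sum (fun k => lowerOnes n k j) i]
  simp only [lowerOnes, Matrix.one_apply, Fin.ext_iff]
  have hi := i.isLt
  have hj := j.isLt
  split_ifs <;> first | (exfalso; omega) | ring

theorem TC_kernel_inverse_factorization {n : ℕ} (β : ℝ) (hβ : β ∈ Set.Ioo (0:ℝ) 1) :
    (fun t s : Fin (n+1) => β ^ (max (t : ℕ) (s : ℕ) + 1) - β ^ (n + 2)
      : Matrix (Fin (n+1)) (Fin (n+1)) ℝ)
      = (diffMatrix n
          * ((β - β ^ 2)⁻¹ • Matrix.diagonal (fun i : Fin (n+1) => (β ^ (i : ℕ))⁻¹))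
          * (diffMatrix n)ᵀ)⁻¹ := by
  obtain ⟨hβ0, hβ1⟩ := hβ
  have hβne : β ≠ 0 := ne_of_gt hβ0
  have hcne : β - β ^ 2 ≠ 0 := by
    have : β - β ^ 2 = β * (1 - β) := by ring
    rw [this]
    exact mul_ne_zero hβne (by linarith)
  set K : Matrix (Fin (n+1)) (Fin (n+1)) ℝ :=
    (fun t s : Fin (n+1) => β ^ (max (t : ℕ) (s : ℕ) + 1) - β ^ (n + 2)) with hKdef
  set F : Matrix (Fin (n+1)) (Fin (n+1)) ℝ := diffMatrix n with hFdef
  set G : Matrix (Fin (n+1)) (Fin (n+1)) ℝ := lowerOnes n with hGdef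
  set D : Matrix (Fin (n+1)) (Fin (n+1)) ℝ :=
    (β - β ^ 2)⁻¹ • Matrix.diagonal (fun i : Fin (n+1) => (β ^ (i : ℕ))⁻¹) with hDdef
  set Dinv : Matrix (Fin (n+1)) (Fin (n+1)) ℝ :=
    Matrix.diagonal (fun i : Fin (n+1) => (β - β ^ 2) * β ^ (i : ℕ)) with hDinvdef
  have hFG : F * G = 1 := diff_mul_lowerOnes
  have hGF : G * F = 1 := mul_eq_one_comm.mp hFG
  have hE : Fᵀ * K * F = Dinv := TC_key β ⟨hβ0, hβ1⟩ K (fun t s => rfl)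
  have hDD : D * Dinv = 1 := by
    rw [hDdef, hDinvdef, Matrix.smul_mul, Matrix.diagonal_mul_diagonal]
    have : (fun i : Fin (n+1) => (β ^ (i:ℕ))⁻¹ * ((β - β ^ 2) * β ^ (i:ℕ)))
        = fun _ : Fin (n+1) => β - β ^ 2 := by
      funext i
      field_simp
    rw [this]
    ext i j
    by_cases h : i = j
    · subst h
      simp [Matrix.diagonal_apply, Matrix.one_apply, inv_mul_cancel₀ hcne]
    · simp [Matrix.diagonal_apply_ne _ h, Matrix.one_apply_ne h]
  have hK : K = Gᵀ * Dinv * G := by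
    calc K = (F * G)ᵀ * K * (F * G) := by rw [hFG]; simp
    _ = Gᵀ * (Fᵀ * K * F) * G := by
        simp only [Matrix.transpose_mul, Matrix.mul_assoc]
    _ = Gᵀ * Dinv * G := by rw [hE]
  have hFtGt : Fᵀ * Gᵀ = 1 := by
    rw [← Matrix.transpose_mul, hGF, Matrix.transpose_one]
  have hMK : F * D * Fᵀ * K = 1 := by
    rw [hK]
    calc F * D * Fᵀ * (Gᵀ * Dinv * G)
        = F * (D * ((Fᵀ * Gᵀ) * Dinv)) * G := by simp only [Matrix.mul_assoc]
      _ = F * (D * Dinv) * G := by rw [hFtGt, Matrix.one_mul]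
      _ = F * G := by rw [hDD, Matrix.mul_one]
      _ = 1 := hFG
  exact (Matrix.inv_eq_right_inv hMK).symm
end

section
/- For β ∈ (0,1), the Tuned-Correlated kernel matrix K_{TC} with entries [K_{TC}]_{ts} = β^{max(t,s)} − β^{n+2}, t,s = 1,…,n+1, is positive definite. -/
open Matrix Finset

lemma telescope_pow (β : ℝ) : ∀ N m : ℕ, m ≤ N →
    β ^ (m+1) - β ^ (N+2) = ∑ k ∈ Finset.Ico m (N+1), (β ^ (k+1) - β ^ (k+2)) := by
  intro N
  induction N with
  | zero => intro m hm; interval_cases m; simp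
  | succ N ih =>
    intro m hm
    rcases Nat.lt_or_ge m (N+1) with h | h
    · rw [Finset.sum_Ico_succ_top (by omega), ← ih m (by omega)]
      ring
    · have : m = N + 1 := by omega
      subst this
      simp

theorem TC_kernel_posDef {n : ℕ} (β : ℝ) (hβ : β ∈ Set.Ioo (0:ℝ) 1) :
    Matrix.PosDef (fun t s : Fin (n+1) => β ^ (max (t : ℕ) (s : ℕ) + 1) - β ^ (n + 2)
      : Matrix (Fin (n+1)) (Fin (n+1)) ℝ) := by
  obtain ⟨hβ0, hβ1⟩ := hβ
  set c : ℕ → ℝ := fun k => β ^ (k+1) - β ^ (k+2) with hc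
  have hcpos : ∀ k, 0 < c k := by
    intro k
    have : β ^ (k+2) < β ^ (k+1) := pow_lt_pow_right_of_lt_one₀ hβ0 hβ1 (by omega)
    simpa [hc] using sub_pos.mpr this
  set ind : Fin (n+1) → ℕ → ℝ := fun t k => if (t:ℕ) ≤ k then (1:ℝ) else 0 with hind
  -- entrywise decomposition
  have hentry : ∀ t s : Fin (n+1),
      β ^ (max (t : ℕ) (s : ℕ) + 1) - β ^ (n + 2)
        = ∑ k ∈ Finset.range (n+1), ind t k * ind s k * c k := by
    intro t s
    have hmax : max (t:ℕ) (s:ℕ) ≤ n := by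
      have h1 := t.isLt; have h2 := s.isLt; omega
    rw [show (n + 2) = (n + 1 + 1) from rfl, telescope_pow β n _ hmax]
    have hIco : Finset.Ico (max (t:ℕ) (s:ℕ)) (n+1)
        = (Finset.range (n+1)).filter (fun k => max (t:ℕ) (s:ℕ) ≤ k) := by
      ext k; simp [Finset.mem_filter, Finset.mem_range, Finset.mem_Ico]; omega
    rw [hIco, Finset.sum_filter]
    refine Finset.sum_congr rfl fun k _ => ?_
    by_cases h1 : (t:ℕ) ≤ k <;> by_cases h2 : (s:ℕ) ≤ k <;>
      simp [hind, h1, h2, hc, max_le_iff]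
  refine posDef_iff_dotProduct_mulVec.mpr ?_
  constructor
  · -- Hermitian
    show _ = _
    ext i j
    refine (conjTranspose_apply _ j i).trans ?_
    simp [max_comm]
  · intro x hx
    -- the partial sums
    set S : ℕ → ℝ := fun k => ∑ t : Fin (n+1), ind t k * x t with hS
    have hquad : dotProduct (star x)
        ((fun t s : Fin (n+1) => β ^ (max (t : ℕ) (s : ℕ) + 1) - β ^ (n + 2)) *ᵥ x)
        = ∑ k ∈ Finset.range (n+1), c k * S k ^ 2 := by
      simp only [dotProduct, mulVec, star, Pi.star_apply, star_trivial]
      calc ∑ t : Fin (n+1), x t * ∑ s : Fin (n+1),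
              (β ^ (max (t : ℕ) (s : ℕ) + 1) - β ^ (n + 2)) * x s
          = ∑ t : Fin (n+1), ∑ s : Fin (n+1), ∑ k ∈ Finset.range (n+1),
              c k * (ind t k * x t) * (ind s k * x s) := by
            refine Finset.sum_congr rfl fun t _ => ?_
            rw [Finset.mul_sum]
            refine Finset.sum_congr rfl fun s _ => ?_
            rw [hentry t s, Finset.sum_mul, Finset.mul_sum]
            exact Finset.sum_congr rfl fun k _ => by ring
        _ = ∑ t : Fin (n+1), ∑ k ∈ Finset.range (n+1), ∑ s : Fin (n+1),
              c k * (ind t k * x t) * (ind s k * x s) :=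
            Finset.sum_congr rfl fun t _ => Finset.sum_comm
        _ = ∑ k ∈ Finset.range (n+1), ∑ t : Fin (n+1), ∑ s : Fin (n+1),
              c k * (ind t k * x t) * (ind s k * x s) := Finset.sum_comm
        _ = ∑ k ∈ Finset.range (n+1), c k * S k ^ 2 := by
            refine Finset.sum_congr rfl fun k _ => ?_
            rw [hS]
            simp only [pow_two]
            rw [Finset.sum_mul_sum, Finset.mul_sum]
            refine Finset.sum_congr rfl fun t _ => ?_
            rw [Finset.mul_sum]
            exact Finset.sum_congr rfl fun s _ => by ring
    rw [hquad]
    -- positivity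
    have hnonneg : ∀ k ∈ Finset.range (n+1), 0 ≤ c k * S k ^ 2 :=
      fun k _ => mul_nonneg (hcpos k).le (sq_nonneg _)
    -- there exists k with S k ≠ 0
    have hexists : ∃ k ∈ Finset.range (n+1), S k ≠ 0 := by
      by_contra hcon
      push_neg at hcon
      apply hx
      funext j
      have key : ∀ m : ℕ, ∀ hm : m < n + 1, x ⟨m, hm⟩ = 0 := by
        intro m
        induction m using Nat.strong_induction_on with
        | _ m IH =>
          intro hm
          have hSm : S m = 0 := hcon m (Finset.mem_range.mpr hm)
          have hsplit : S m = (∑ t : Fin (n+1), (if (t:ℕ) < m then x t else 0))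
              + x ⟨m, hm⟩ := by
            rw [hS]
            have : ∀ t : Fin (n+1), ind t m * x t
                = (if (t:ℕ) < m then x t else 0) + (if t = ⟨m, hm⟩ then x t else 0) := by
              intro t
              by_cases h1 : (t:ℕ) < m
              · have : t ≠ ⟨m, hm⟩ := by
                  intro h; rw [h] at h1; simp at h1
                simp [hind, h1, this, Nat.le_of_lt h1]
              · by_cases h2 : t = ⟨m, hm⟩
                · subst h2; simp [hind]
                · have : ¬ (t:ℕ) ≤ m := by
                    rcases Nat.lt_or_ge m (t:ℕ) with h | h
                    · omega
                    · exfalso; exact h2 (Fin.ext (show (t:ℕ) = m by omega))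
                  simp [hind, h1, h2, this]
            simp_rw [this]
            rw [Finset.sum_add_distrib, Finset.sum_ite_eq' Finset.univ ⟨m, hm⟩ x]
            simp
          have hzero : (∑ t : Fin (n+1), (if (t:ℕ) < m then x t else 0)) = 0 := by
            refine Finset.sum_eq_zero fun t _ => ?_
            by_cases h : (t:ℕ) < m
            · have := IH (t:ℕ) h t.isLt
              simp only [h, if_true]
              simpa [Fin.eta] using this
            · simp [h]
          rw [hsplit, hzero, zero_add] at hSm
          exact hSm
      exact key j.val j.isLt
    obtain ⟨k, hk, hSk⟩ := hexists
    have hpos : 0 < c k * S k ^ 2 :=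
      mul_pos (hcpos k) (pow_pos (abs_pos.mpr hSk) 2 |> fun h => by
        simpa [sq_abs] using h)
    exact Finset.sum_pos' hnonneg ⟨k, hk, hpos⟩
end

section
/- Let D̃ = diag(d_1,…,d_{n+1}) with 0 < d_1 ≤ d_2 ≤ … ≤ d_{n+1}, let F be the (n+1)×(n+1) matrix with 1's on the diagonal and −1's on the first subdiagonal, and set R = F D̃ Fᵀ. For u = (u_1,…,u_n, 0)ᵀ and ũ = (0, u_1,…,u_n)ᵀ in ℂ^{n+1}, one has ũ* R ũ ≥ u* R u. -/
open Matrix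

/-- the "next entry" of a vector, 0 past the end -/
noncomputable def nxt {n : ℕ} (w : Fin (n+1) → ℂ) (k : Fin (n+1)) : ℂ :=
  if h : (k : ℕ) < n then w ⟨(k : ℕ) + 1, by omega⟩ else 0

lemma diff_mulVec {n : ℕ} (w : Fin (n+1) → ℂ) (k : Fin (n+1)) :
    (((diffMatrix n)ᵀ.map Complex.ofReal) *ᵥ w) k = w k - nxt w k := by
  have : ∀ j : Fin (n+1),
      ((diffMatrix n)ᵀ.map Complex.ofReal) k j * w j
      = (if j = k then w j else 0) + (if (k : ℕ) + 1 = (j : ℕ) then -(w j) else 0) := by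
    intro j
    simp only [Matrix.map_apply, Matrix.transpose_apply, diffMatrix]
    by_cases h1 : j = k
    · have h2 : ¬ ((k : ℕ) + 1 = (j : ℕ)) := by omega
      simp [h1, h2]
    · by_cases h2 : (k : ℕ) + 1 = (j : ℕ)
      · simp [h1, h2]
      · simp [h1, h2]
  rw [Matrix.mulVec, dotProduct]
  rw [Finset.sum_congr rfl (fun j _ => this j), Finset.sum_add_distrib]
  rw [Finset.sum_ite_eq' Finset.univ k w]
  simp only [Finset.mem_univ, if_true]
  congr 1
  by_cases h : (k : ℕ) < n
  · have hk : ∀ j : Fin (n+1), ((k : ℕ) + 1 = (j : ℕ)) ↔ j = (⟨(k : ℕ) + 1, by omega⟩ : Fin (n+1)) := by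
      intro j; rw [Fin.ext_iff]; simp; omega
    rw [Finset.sum_congr rfl (fun j _ => by rw [if_congr (hk j) rfl rfl])]
    rw [Finset.sum_ite_eq' Finset.univ _ (fun j => -(w j))]
    simp [nxt, h, sub_eq_add_neg]
  · have hk : ∀ j : Fin (n+1), ¬ ((k : ℕ) + 1 = (j : ℕ)) := by
      intro j; have := j.isLt; have := k.isLt; omega
    rw [Finset.sum_congr rfl (fun j _ => by rw [if_neg (hk j)])]
    simp [nxt, h]

lemma quad_form {n : ℕ} (d : Fin (n+1) → ℝ) (w : Fin (n+1) → ℂ) :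
    (star w ⬝ᵥ (((diffMatrix n * Matrix.diagonal d * (diffMatrix n)ᵀ).map
        (Complex.ofReal)) *ᵥ w)).re
    = ∑ k, d k * Complex.normSq (w k - nxt w k) := by
  have hmap : (diffMatrix n * Matrix.diagonal d * (diffMatrix n)ᵀ).map (Complex.ofReal)
      = (diffMatrix n).map Complex.ofReal * Matrix.diagonal (fun k => (d k : ℂ))
        * ((diffMatrix n)ᵀ.map Complex.ofReal) := by
    have h1 : (diffMatrix n * Matrix.diagonal d * (diffMatrix n)ᵀ).map (Complex.ofRealHom)
        = (diffMatrix n).map Complex.ofRealHom * (Matrix.diagonal d).map Complex.ofRealHom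
          * ((diffMatrix n)ᵀ.map Complex.ofRealHom) := by
      rw [Matrix.map_mul, Matrix.map_mul]
    have h2 : (Matrix.diagonal d).map (Complex.ofRealHom)
        = Matrix.diagonal (fun k => (d k : ℂ)) := by
      rw [Matrix.diagonal_map (map_zero _)]; rfl
    rw [← h2]
    exact h1
  rw [hmap]
  set v : Fin (n+1) → ℂ := ((diffMatrix n)ᵀ.map Complex.ofReal) *ᵥ w with hv
  rw [Matrix.mul_assoc, ← Matrix.mulVec_mulVec, ← Matrix.mulVec_mulVec, Matrix.dotProduct_mulVec]
  have hstar : star w ᵥ* ((diffMatrix n).map Complex.ofReal) = star v := by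
    funext k
    simp only [Matrix.vecMul, dotProduct, hv, Pi.star_apply, Matrix.mulVec, star_sum]
    refine Finset.sum_congr rfl fun j _ => ?_
    simp only [Matrix.map_apply, Matrix.transpose_apply, star_mul', Complex.star_def,
      Complex.conj_ofReal, Pi.star_apply]
    ring
  rw [hstar]
  have hdiag : (Matrix.diagonal (fun k => (d k : ℂ))) *ᵥ v = fun k => (d k : ℂ) * v k := by
    funext k; rw [Matrix.mulVec_diagonal]
  rw [hdiag, dotProduct, Complex.re_sum]
  refine Finset.sum_congr rfl fun k _ => ?_
  have : (star v : Fin (n+1) → ℂ) k * ((d k : ℂ) * v k)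
      = ((d k * Complex.normSq (v k) : ℝ) : ℂ) := by
    simp only [Pi.star_apply, Complex.star_def]
    rw [mul_comm ((d k : ℂ)) (v k), ← mul_assoc, mul_comm ((starRingEnd ℂ) (v k)) (v k),
      Complex.mul_conj]
    push_cast
    ring
  rw [this, Complex.ofReal_re]
  congr 1
  rw [hv, diff_mulVec]

theorem TC_regularizer_shift_inequality {n : ℕ}
    (d : Fin (n+1) → ℝ)
    (hdpos : ∀ k, 0 < d k) (hdmono : Monotone d)
    (u ut : Fin (n+1) → ℂ)
    (hu_last : u (Fin.last n) = 0)
    (hut0 : ut 0 = 0)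
    (hshift : ∀ i : Fin n, ut i.succ = u i.castSucc) :
    (star u ⬝ᵥ (((diffMatrix n * Matrix.diagonal d * (diffMatrix n)ᵀ).map
        (Complex.ofReal)) *ᵥ u)).re
      ≤ (star ut ⬝ᵥ (((diffMatrix n * Matrix.diagonal d * (diffMatrix n)ᵀ).map
        (Complex.ofReal)) *ᵥ ut)).re := by
  rw [quad_form, quad_form]
  have hlastterm : u (Fin.last n) - nxt u (Fin.last n) = 0 := by
    rw [hu_last, nxt]
    simp
  rw [Fin.sum_univ_castSucc (f := fun k => d k * Complex.normSq (u k - nxt u k)),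
    Fin.sum_univ_succ (f := fun k => d k * Complex.normSq (ut k - nxt ut k))]
  rw [hlastterm]
  simp only [Complex.normSq_zero, mul_zero, add_zero]
  have hterm : ∀ i : Fin n, ut i.succ - nxt ut i.succ = u i.castSucc - nxt u i.castSucc := by
    intro i
    rw [hshift i]
    congr 1
    rw [nxt, nxt,
      dif_pos (show ((i.castSucc : Fin (n+1)) : ℕ) < n by
        simp only [Fin.coe_castSucc]; exact i.isLt)]
    by_cases h : (i : ℕ) + 1 < n
    · rw [dif_pos (show ((i.succ : Fin (n+1)) : ℕ) < n by
        simp only [Fin.val_succ]; exact h)]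
      have := hshift ⟨(i : ℕ) + 1, h⟩
      convert this using 2 <;> simp [Fin.ext_iff]
    · rw [dif_neg (show ¬ ((i.succ : Fin (n+1)) : ℕ) < n by
        simp only [Fin.val_succ]; exact h)]
      have hn : (i : ℕ) + 1 = n := by have := i.isLt; omega
      have hl : (⟨((i.castSucc : Fin (n+1)) : ℕ) + 1, by
          simp only [Fin.coe_castSucc]; omega⟩ : Fin (n+1)) = Fin.last n := by
        simp [Fin.ext_iff, hn]
      rw [hl, hu_last]
  calc ∑ i : Fin n, d i.castSucc * Complex.normSq (u i.castSucc - nxt u i.castSucc)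
      ≤ ∑ i : Fin n, d i.succ * Complex.normSq (ut i.succ - nxt ut i.succ) := by
        refine Finset.sum_le_sum fun i _ => ?_
        rw [hterm i]
        exact mul_le_mul_of_nonneg_right (hdmono (Fin.castSucc_le_succ i))
          (Complex.normSq_nonneg _)
    _ ≤ d 0 * Complex.normSq (ut 0 - nxt ut 0)
        + ∑ i : Fin n, d i.succ * Complex.normSq (ut i.succ - nxt ut i.succ) := by
        exact le_add_of_nonneg_left (mul_nonneg (hdpos 0).le (Complex.normSq_nonneg _))
end

section
/- Let Σ be a real (n+1)×(n+1) positive definite Toeplitz matrix, D̃ = diag(d_1,…,d_{n+1}) with 0 < d_1 ≤ … ≤ d_{n+1}, F the first-difference matrix (1's on diagonal, −1's on first subdiagonal), and R = F D̃ Fᵀ. If b ∈ ℝ^{n+1} is nonzero and satisfies (Σ + R) b = c·e_1 for some real c, then all zeros of the polynomial z^n b(z) = b_0 z^n + b_1 z^{n−1} + … + b_n lie strictly inside the unit circle. -/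
open Matrix

namespace RYWaux
open Finset Complex

variable {N : ℕ}

/-- extend a Fin-indexed vector to ℕ by zero -/
def extV (f : Fin N → ℝ) : ℕ → ℝ := fun k => if h : k < N then f ⟨k, h⟩ else 0

def extM (S : Matrix (Fin N) (Fin N) ℝ) : ℕ → ℕ → ℝ :=
  fun i j => if h : i < N then if h' : j < N then S ⟨i, h⟩ ⟨j, h'⟩ else 0 else 0

def FF : ℕ → ℕ → ℝ := fun i j => if i = j then 1 else if j + 1 = i then -1 else 0

def RRe (N : ℕ) (dd : ℕ → ℝ) : ℕ → ℕ → ℝ := fun i j => ∑ k ∈ range N, FF i k * dd k * FF j k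

/-- complex sesquilinear form of a real ℕ-indexed matrix -/
noncomputable def BF (N : ℕ) (M : ℕ → ℕ → ℝ) (x y : ℕ → ℂ) : ℂ :=
  ∑ i ∈ range N, ∑ j ∈ range N, (starRingEnd ℂ) (x i) * (M i j : ℂ) * y j

def QF (N : ℕ) (M : ℕ → ℕ → ℝ) (y : ℕ → ℝ) : ℝ :=
  ∑ i ∈ range N, ∑ j ∈ range N, y i * M i j * y j

lemma FF_eq (i k : ℕ) :
    (FF i k : ℂ) = (if i = k then 1 else 0) - (if i = k + 1 then 1 else 0) := by
  unfold FF
  by_cases h1 : i = k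
  · subst h1
    have : ¬ (i = i + 1) := by omega
    simp [this]
  · by_cases h2 : i = k + 1
    · subst h2
      have : k + 1 = k + 1 := rfl
      simp [h1, this]
    · have : ¬ (k + 1 = i) := by omega
      simp [h1, h2, this]

lemma sum_FF (x : ℕ → ℂ) (hx : x N = 0) {k : ℕ} (hk : k < N) :
    ∑ i ∈ range N, x i * (FF i k : ℂ) = x k - x (k + 1) := by
  have h1 : ∀ i, x i * (FF i k : ℂ)
      = (if i = k then x i else 0) - (if i = k + 1 then x i else 0) := by
    intro i
    rw [FF_eq]
    by_cases h1 : i = k <;> by_cases h2 : i = k + 1 <;> simp [h1, h2]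
  rw [Finset.sum_congr rfl (fun i _ => h1 i), Finset.sum_sub_distrib,
    Finset.sum_ite_eq' (range N) k x, Finset.sum_ite_eq' (range N) (k+1) x]
  rcases Nat.lt_or_ge (k+1) N with h | h
  · simp [Finset.mem_range, hk, h]
  · have hkN : k + 1 = N := by omega
    simp [Finset.mem_range, hk, hkN, hx]

lemma BF_R_expand (dd : ℕ → ℝ) (x y : ℕ → ℂ) (hx : x N = 0) (hy : y N = 0) :
    BF N (RRe N dd) x y
      = ∑ k ∈ range N, (dd k : ℂ) * ((starRingEnd ℂ) (x k - x (k+1))) * (y k - y (k+1)) := by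
  unfold BF RRe
  calc ∑ i ∈ range N, ∑ j ∈ range N,
        (starRingEnd ℂ) (x i) * ((∑ k ∈ range N, FF i k * dd k * FF j k : ℝ) : ℂ) * y j
      = ∑ i ∈ range N, ∑ j ∈ range N, ∑ k ∈ range N,
        (dd k : ℂ) * ((starRingEnd ℂ) (x i) * (FF i k : ℂ)) * ((FF j k : ℂ) * y j) := by
        refine Finset.sum_congr rfl fun i _ => Finset.sum_congr rfl fun j _ => ?_
        push_cast
        rw [Finset.mul_sum, Finset.sum_mul]
        refine Finset.sum_congr rfl fun k _ => ?_
        ring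
    _ = ∑ k ∈ range N, ∑ i ∈ range N, ∑ j ∈ range N,
        (dd k : ℂ) * ((starRingEnd ℂ) (x i) * (FF i k : ℂ)) * ((FF j k : ℂ) * y j) := by
        rw [show (∑ i ∈ range N, ∑ j ∈ range N, ∑ k ∈ range N,
          (dd k : ℂ) * ((starRingEnd ℂ) (x i) * (FF i k : ℂ)) * ((FF j k : ℂ) * y j))
          = ∑ i ∈ range N, ∑ k ∈ range N, ∑ j ∈ range N,
          (dd k : ℂ) * ((starRingEnd ℂ) (x i) * (FF i k : ℂ)) * ((FF j k : ℂ) * y j)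
          from Finset.sum_congr rfl fun i _ => Finset.sum_comm ..]
        exact Finset.sum_comm ..
    _ = ∑ k ∈ range N, (dd k : ℂ)
          * (∑ i ∈ range N, (starRingEnd ℂ) (x i) * (FF i k : ℂ))
          * (∑ j ∈ range N, (FF j k : ℂ) * y j) := by
        refine Finset.sum_congr rfl fun k _ => Eq.symm ?_
        rw [mul_assoc, Finset.sum_mul_sum, Finset.mul_sum]
        refine Finset.sum_congr rfl fun i _ => ?_
        rw [Finset.mul_sum]
        exact Finset.sum_congr rfl fun j _ => by ring
    _ = _ := by
        refine Finset.sum_congr rfl fun k hk => ?_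
        have hk' := Finset.mem_range.mp hk
        have h1 : ∑ i ∈ range N, (starRingEnd ℂ) (x i) * (FF i k : ℂ)
            = (starRingEnd ℂ) (x k - x (k+1)) := by
          rw [sum_FF (fun i => (starRingEnd ℂ) (x i)) (by simp [hx]) hk']
          simp [map_sub]
        have h2 : ∑ j ∈ range N, (FF j k : ℂ) * y j = y k - y (k+1) := by
          rw [← sum_FF y hy hk']
          exact Finset.sum_congr rfl fun j _ => mul_comm _ _
        rw [h1, h2]

lemma BF_split (M1 M2 : ℕ → ℕ → ℝ) (x y : ℕ → ℂ) :
    BF N (fun i j => M1 i j + M2 i j) x y = BF N M1 x y + BF N M2 x y := by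
  unfold BF
  rw [← Finset.sum_add_distrib]
  refine Finset.sum_congr rfl fun i _ => ?_
  rw [← Finset.sum_add_distrib]
  refine Finset.sum_congr rfl fun j _ => ?_
  push_cast
  ring

lemma BF_conj (M : ℕ → ℕ → ℝ) (hM : ∀ i j, M i j = M j i) (x y : ℕ → ℂ) :
    BF N M x y = (starRingEnd ℂ) (BF N M y x) := by
  unfold BF
  rw [map_sum]
  rw [Finset.sum_comm]
  refine Finset.sum_congr rfl fun i _ => ?_
  rw [map_sum]
  refine Finset.sum_congr rfl fun j _ => ?_
  simp only [_root_.map_mul, Complex.conj_conj, Complex.conj_ofReal]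
  rw [hM j i]
  ring

lemma BF_sub_right (M : ℕ → ℕ → ℝ) (x u v : ℕ → ℂ) (s : ℂ) :
    BF N M x (fun k => u k - s * v k) = BF N M x u - s * BF N M x v := by
  unfold BF
  rw [Finset.mul_sum, ← Finset.sum_sub_distrib]
  refine Finset.sum_congr rfl fun i _ => ?_
  rw [Finset.mul_sum, ← Finset.sum_sub_distrib]
  refine Finset.sum_congr rfl fun j _ => ?_
  ring

lemma BF_congr (M : ℕ → ℕ → ℝ) (x y y' : ℕ → ℂ) (h : ∀ j, j < N → y j = y' j) :
    BF N M x y = BF N M x y' := by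
  unfold BF
  refine Finset.sum_congr rfl fun i _ => Finset.sum_congr rfl fun j hj => ?_
  rw [h j (Finset.mem_range.mp hj)]

lemma BF_sub_left (M : ℕ → ℕ → ℝ) (u v w : ℕ → ℂ) (s : ℂ) :
    BF N M (fun k => u k - s * v k) w
      = BF N M u w - (starRingEnd ℂ) s * BF N M v w := by
  unfold BF
  rw [Finset.mul_sum, ← Finset.sum_sub_distrib]
  refine Finset.sum_congr rfl fun i _ => ?_
  rw [Finset.mul_sum, ← Finset.sum_sub_distrib]
  refine Finset.sum_congr rfl fun j _ => ?_
  simp only [map_sub, _root_.map_mul]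
  ring

lemma BF_sub_sub (M : ℕ → ℕ → ℝ) (x y : ℕ → ℂ) (s : ℂ) :
    BF N M (fun k => x k - s * y k) (fun k => x k - s * y k)
      = BF N M x x - s * BF N M x y - (starRingEnd ℂ) s * BF N M y x
        + ((starRingEnd ℂ) s * s) * BF N M y y := by
  rw [BF_sub_left, BF_sub_right, BF_sub_right]
  ring

lemma BF_re (M : ℕ → ℕ → ℝ) (x : ℕ → ℂ) :
    (BF N M x x).re = QF N M (fun k => (x k).re) + QF N M (fun k => (x k).im) := by
  unfold BF QF
  rw [Complex.re_sum, ← Finset.sum_add_distrib]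
  refine Finset.sum_congr rfl fun i _ => ?_
  rw [Complex.re_sum, ← Finset.sum_add_distrib]
  refine Finset.sum_congr rfl fun j _ => ?_
  simp [Complex.mul_re, Complex.mul_im]

lemma re_sum_normSq (dd : ℕ → ℝ) (t : ℕ → ℂ) :
    (∑ k ∈ range N, (dd k : ℂ) * ((starRingEnd ℂ) (t k)) * (t k)).re
      = ∑ k ∈ range N, dd k * Complex.normSq (t k) := by
  rw [Complex.re_sum]
  refine Finset.sum_congr rfl fun k _ => ?_
  rw [mul_assoc]
  rw [← Complex.normSq_eq_conj_mul_self]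
  rw [← Complex.ofReal_mul]
  exact Complex.ofReal_re _

lemma QF_extM_eq (S : Matrix (Fin N) (Fin N) ℝ) (y : ℕ → ℝ) :
    QF N (extM S) y = (fun i : Fin N => y i) ⬝ᵥ S *ᵥ (fun i : Fin N => y i) := by
  unfold QF dotProduct mulVec dotProduct
  rw [← Fin.sum_univ_eq_sum_range]
  refine Finset.sum_congr rfl fun i _ => ?_
  rw [Finset.mul_sum, ← Fin.sum_univ_eq_sum_range]
  refine Finset.sum_congr rfl fun j _ => ?_
  simp only [extM, i.isLt, j.isLt, dif_pos, Fin.eta]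
  ring

lemma QF_S_nonneg (S : Matrix (Fin N) (Fin N) ℝ) (hpd : S.PosDef) (y : ℕ → ℝ) :
    0 ≤ QF N (extM S) y := by
  rw [QF_extM_eq]
  have := hpd.posSemidef.dotProduct_mulVec_nonneg (fun i : Fin N => y i)
  simpa using this

lemma QF_S_pos (S : Matrix (Fin N) (Fin N) ℝ) (hpd : S.PosDef) (y : ℕ → ℝ)
    (hy : ∃ k, ∃ h : k < N, y k ≠ 0) : 0 < QF N (extM S) y := by
  rw [QF_extM_eq]
  obtain ⟨k, hk, hyk⟩ := hy
  have hne : (fun i : Fin N => y i) ≠ 0 := by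
    intro h
    exact hyk (by simpa using congrFun h ⟨k, hk⟩)
  have := hpd.dotProduct_mulVec_pos hne
  simpa using this


noncomputable def pa (bb : ℕ → ℝ) (z : ℂ) : ℕ → ℂ :=
  fun k => ∑ j ∈ range (k+1), (bb j : ℂ) * z ^ (k - j)

lemma pa_zero (bb : ℕ → ℝ) (z : ℂ) : pa bb z 0 = (bb 0 : ℂ) := by
  simp [pa]

lemma pa_succ (bb : ℕ → ℝ) (z : ℂ) (k : ℕ) :
    pa bb z (k+1) = z * pa bb z k + (bb (k+1) : ℂ) := by
  unfold pa
  rw [Finset.sum_range_succ, Finset.mul_sum]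
  congr 1
  · refine Finset.sum_congr rfl fun j hj => ?_
    have hj' : j ≤ k := Nat.lt_succ_iff.mp (Finset.mem_range.mp hj)
    have : k + 1 - j = (k - j) + 1 := by omega
    rw [this, pow_succ]
    ring
  · simp

noncomputable def uu (n : ℕ) (bb : ℕ → ℝ) (z : ℂ) : ℕ → ℂ :=
  fun k => if k < n then pa bb z k else 0

noncomputable def vv (n : ℕ) (bb : ℕ → ℝ) (z : ℂ) : ℕ → ℂ :=
  fun k => if k = 0 then 0 else uu n bb z (k-1)

lemma uu_ge (n : ℕ) (bb : ℕ → ℝ) (z : ℂ) {k : ℕ} (h : n ≤ k) : uu n bb z k = 0 := by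
  simp [uu, Nat.not_lt.mpr h]

lemma vv_zero (n : ℕ) (bb : ℕ → ℝ) (z : ℂ) : vv n bb z 0 = 0 := rfl

lemma vv_succ (n : ℕ) (bb : ℕ → ℝ) (z : ℂ) (k : ℕ) : vv n bb z (k+1) = uu n bb z k := by
  simp [vv]

lemma decomp (n : ℕ) (bb : ℕ → ℝ) (z : ℂ) (hn : 0 < n) (hroot : pa bb z n = 0) :
    ∀ k, k ≤ n → (bb k : ℂ) = uu n bb z k - z * vv n bb z k := by
  intro k hk
  match k with
  | 0 => simp [uu, vv, hn, pa_zero]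
  | (j+1) =>
      rw [vv_succ]
      rcases Nat.lt_or_ge (j+1) n with h | h
      · have hj : j < n := by omega
        simp only [uu, if_pos h, if_pos hj]
        rw [pa_succ]
        ring
      · have hj1 : j + 1 = n := by omega
        have hj : j < n := by omega
        simp only [uu, if_pos hj, if_neg (by omega : ¬ (j+1 < n))]
        have := pa_succ bb z j
        rw [hj1] at this
        rw [hroot] at this
        have hb : (bb (j+1) : ℂ) = - (z * pa bb z j) := by
          rw [hj1]; linear_combination -this
        rw [hb]
        ring

lemma BF_S_shift {n : ℕ} (S : Matrix (Fin (n+1)) (Fin (n+1)) ℝ)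
    (htoep : ∀ i j k l : Fin (n+1), (i : ℤ) - (j : ℤ) = (k : ℤ) - (l : ℤ) → S i j = S k l)
    (u v : ℕ → ℂ) (hu : ∀ k, n ≤ k → u k = 0)
    (hv0 : v 0 = 0) (hvs : ∀ k, v (k+1) = u k) :
    BF (n+1) (extM S) v v = BF (n+1) (extM S) u u := by
  have hshift : ∀ i j : ℕ, i < n → j < n → extM S (i+1) (j+1) = extM S i j := by
    intro i j hi hj
    unfold extM
    rw [dif_pos (by omega : i + 1 < n + 1), dif_pos (by omega : j + 1 < n + 1),
      dif_pos (by omega : i < n + 1), dif_pos (by omega : j < n + 1)]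
    apply htoep
    push_cast
    ring
  unfold BF
  rw [Finset.sum_range_succ' _ n]
  have h0 : (∑ j ∈ range (n+1), (starRingEnd ℂ) (v 0) * (extM S 0 j : ℂ) * v j) = 0 := by
    simp [hv0]
  rw [h0, add_zero]
  rw [Finset.sum_range_succ _ n]
  have h1 : (∑ j ∈ range (n+1), (starRingEnd ℂ) (u n) * (extM S n j : ℂ) * u j) = 0 := by
    simp [hu n le_rfl]
  rw [h1, add_zero]
  refine Finset.sum_congr rfl fun i hi => ?_
  have hi' : i < n := Finset.mem_range.mp hi
  rw [Finset.sum_range_succ' _ n, Finset.sum_range_succ _ n]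
  rw [show (starRingEnd ℂ) (v (i+1)) * (extM S (i+1) 0 : ℂ) * v 0 = 0 by simp [hv0]]
  rw [show (starRingEnd ℂ) (u i) * (extM S i n : ℂ) * u n = 0 by simp [hu n le_rfl]]
  rw [add_zero, add_zero]
  refine Finset.sum_congr rfl fun j hj => ?_
  have hj' : j < n := Finset.mem_range.mp hj
  rw [hvs, hvs, hshift i j hi' hj']


end RYWaux

open RYWaux Finset Complex

/-- Proposition 2: minimum phase property of the regularized Yule-Walker solution
with TC-kernel regularization. -/
theorem regularized_yule_walker_min_phase_TC {n : ℕ}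
    (S : Matrix (Fin (n+1)) (Fin (n+1)) ℝ)
    (hpd : S.PosDef) (htoep : IsToeplitz S)
    (d : Fin (n+1) → ℝ)
    (hdpos : ∀ k, 0 < d k) (hdmono : Monotone d)
    (b : Fin (n+1) → ℝ) (hb : b ≠ 0) (c : ℝ)
    (hYW : (S + diffMatrix n * Matrix.diagonal d * (diffMatrix n)ᵀ) *ᵥ b
      = c • ((Pi.single (0 : Fin (n+1)) (1 : ℝ)) : Fin (n+1) → ℝ)) :
    ∀ z : ℂ, (∑ k : Fin (n+1), (b k : ℂ) * z ^ (n - (k : ℕ))) = 0 → ‖z‖ < 1 := by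
  intro z hz
  by_cases hn0 : n = 0
  · subst hn0
    obtain ⟨i, hi⟩ := Function.ne_iff.mp hb
    have hi0 : i = 0 := Fin.fin_one_eq_zero i
    subst hi0
    rw [Fin.sum_univ_one] at hz
    simp at hz
    exact absurd hz hi
  have hn : 0 < n := Nat.pos_of_ne_zero hn0
  set sb : ℕ → ℝ := extV b with hsb
  set dd : ℕ → ℝ := extV d with hdd
  set AAn : ℕ → ℕ → ℝ := fun i j => extM S i j + RRe (n+1) dd i j with hAAn
  set u : ℕ → ℂ := uu n sb z with hu
  set v : ℕ → ℂ := vv n sb z with hv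
  set sbc : ℕ → ℂ := fun k => (sb k : ℂ) with hsbc
  have hsb_lt : ∀ (k : ℕ) (h : k < n+1), sb k = b ⟨k, h⟩ := fun k h => dif_pos h
  have hsb_coe : ∀ i : Fin (n+1), sb (i : ℕ) = b i := by
    intro i; rw [hsb_lt _ i.isLt]
  have hsbN : sb (n+1) = 0 := dif_neg (by omega)
  have hdd_coe : ∀ i : Fin (n+1), dd (i : ℕ) = d i := by
    intro i; unfold dd; unfold extV; rw [dif_pos i.isLt]
  -- root of the Horner recursion
  have hroot : pa sb z n = 0 := by
    rw [← hz]
    unfold pa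
    rw [← Fin.sum_univ_eq_sum_range (fun j => (sb j : ℂ) * z ^ (n - j)) (n+1)]
    exact Finset.sum_congr rfl fun i _ => by rw [hsb_coe]
  -- entries of the big matrix
  have hFF : ∀ i k : Fin (n+1), diffMatrix n i k = FF (i : ℕ) (k : ℕ) := by
    intro i k
    unfold diffMatrix FF
    by_cases h : i = k
    · simp [h]
    · have h' : ¬ ((i : ℕ) = (k : ℕ)) := fun hh => h (Fin.ext hh)
      simp [h, h']
  have hentry : ∀ i j : Fin (n+1),
      (S + diffMatrix n * Matrix.diagonal d * (diffMatrix n)ᵀ) i j = AAn (i : ℕ) (j : ℕ) := by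
    intro i j
    rw [Matrix.add_apply, hAAn]
    congr 1
    · unfold extM
      rw [dif_pos i.isLt, dif_pos j.isLt]
    · rw [Matrix.mul_apply]
      simp only [Matrix.transpose_apply, Matrix.mul_diagonal]
      unfold RRe
      rw [← Fin.sum_univ_eq_sum_range (fun k => FF (i:ℕ) k * dd k * FF (j:ℕ) k) (n+1)]
      refine Finset.sum_congr rfl fun k _ => ?_
      rw [hFF i k, hFF j k, hdd_coe k]
  -- scalar form of the Yule-Walker equations
  have hYWn : ∀ i : ℕ, i < n+1 →
      ∑ j ∈ range (n+1), AAn i j * sb j = c * (if i = 0 then 1 else 0) := by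
    intro i hi
    have h1 := congrFun hYW ⟨i, hi⟩
    simp only [Matrix.mulVec, dotProduct, Pi.smul_apply, smul_eq_mul] at h1
    rw [← Fin.sum_univ_eq_sum_range (fun j => AAn i j * sb j) (n+1)]
    have h2 : ∀ j : Fin (n+1), AAn i (j : ℕ) * sb (j : ℕ)
        = (S + diffMatrix n * Matrix.diagonal d * (diffMatrix n)ᵀ) ⟨i, hi⟩ j * b j := by
      intro j
      rw [hentry ⟨i, hi⟩ j, hsb_coe j]
    rw [Finset.sum_congr rfl fun j _ => h2 j, h1, Pi.single_apply]
    congr 1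
    simp [Fin.ext_iff]
  -- symmetry of AAn
  have hAsymm : ∀ i j, AAn i j = AAn j i := by
    intro i j
    simp only [hAAn]
    have h1 : extM S i j = extM S j i := by
      unfold extM
      by_cases hi : i < n+1
      · by_cases hj : j < n+1
        · rw [dif_pos hi, dif_pos hj, dif_pos hj, dif_pos hi]
          have := congrFun (congrFun hpd.1 ⟨i, hi⟩) ⟨j, hj⟩
          rw [Matrix.conjTranspose_apply] at this
          simpa using this.symm
        · rw [dif_pos hi, dif_neg hj, dif_neg hj]
      · by_cases hj : j < n+1
        · rw [dif_neg hi, dif_pos hj, dif_neg hi]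
        · rw [dif_neg hi, dif_neg hj]
    have h2 : RRe (n+1) dd i j = RRe (n+1) dd j i := by
      unfold RRe
      exact Finset.sum_congr rfl fun k _ => by ring
    rw [h1, h2]
  -- the linear-functional identity
  have F2 : ∀ x : ℕ → ℂ, BF (n+1) AAn x sbc = (starRingEnd ℂ) (x 0) * (c : ℂ) := by
    intro x
    unfold BF
    calc ∑ i ∈ range (n+1), ∑ j ∈ range (n+1),
          (starRingEnd ℂ) (x i) * (AAn i j : ℂ) * sbc j
        = ∑ i ∈ range (n+1), (starRingEnd ℂ) (x i)
            * (((∑ j ∈ range (n+1), AAn i j * sb j : ℝ)) : ℂ) := by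
          refine Finset.sum_congr rfl fun i _ => ?_
          push_cast
          rw [Finset.mul_sum]
          exact Finset.sum_congr rfl fun j _ => by rw [hsbc]; ring
      _ = ∑ i ∈ range (n+1), (if i = 0 then (starRingEnd ℂ) (x i) * (c : ℂ) else 0) := by
          refine Finset.sum_congr rfl fun i hi => ?_
          rw [hYWn i (Finset.mem_range.mp hi)]
          by_cases h : i = 0 <;> simp [h]
      _ = (starRingEnd ℂ) (x 0) * (c : ℂ) := by
          rw [Finset.sum_ite_eq' (range (n+1)) 0 (fun i => (starRingEnd ℂ) (x i) * (c : ℂ))]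
          rw [if_pos (Finset.mem_range.mpr (by omega))]
  -- supports
  have huge : ∀ k, n ≤ k → u k = 0 := fun k hk => uu_ge n sb z hk
  have hv0 : v 0 = 0 := rfl
  have hvs : ∀ k, v (k+1) = u k := fun k => vv_succ n sb z k
  have hvN : v (n+1) = 0 := by rw [hvs]; exact huge n le_rfl
  have hu0 : u 0 = (sb 0 : ℂ) := by
    rw [hu]; unfold uu; rw [if_pos hn, pa_zero]
  -- decomposition b = u - z v
  have hub : ∀ j, j < n+1 → sbc j = u j - z * v j := by
    intro j hj
    exact decomp n sb z hn hroot j (by omega)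
  -- complex identities
  have e1 : BF (n+1) AAn v sbc = 0 := by
    rw [F2 v, hv0]; simp
  have e3 : BF (n+1) AAn v u = z * BF (n+1) AAn v v := by
    have e2 := BF_congr AAn v sbc (fun k => u k - z * v k) hub
    rw [e1, BF_sub_right] at e2
    linear_combination -e2
  have e4 : BF (n+1) AAn u v = (starRingEnd ℂ) z * (starRingEnd ℂ) (BF (n+1) AAn v v) := by
    rw [BF_conj AAn hAsymm u v, e3, _root_.map_mul]
  have e5 : BF (n+1) AAn (fun k => u k - z * v k) (fun k => u k - z * v k)
      = BF (n+1) AAn u u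
        - ((Complex.normSq z : ℝ) : ℂ) * (starRingEnd ℂ) (BF (n+1) AAn v v) := by
    rw [BF_sub_sub, e4, e3, Complex.normSq_eq_conj_mul_self]
    ring
  -- splitting into S and R parts
  have hsplit : ∀ x y : ℕ → ℂ, BF (n+1) AAn x y
      = BF (n+1) (extM S) x y + BF (n+1) (RRe (n+1) dd) x y := by
    intro x y
    simp only [hAAn]
    exact BF_split _ _ x y
  have hx1 : (fun k => u k - z * v k) (n+1) = 0 := by
    simp only [huge (n+1) (by omega), hvN, mul_zero, sub_zero]
  have hR_re : ∀ x : ℕ → ℂ, x (n+1) = 0 →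
      (BF (n+1) (RRe (n+1) dd) x x).re
        = ∑ k ∈ range (n+1), dd k * Complex.normSq (x k - x (k+1)) := by
    intro x hx
    rw [BF_R_expand dd x x hx hx, re_sum_normSq]
  have hddnn : ∀ k, 0 ≤ dd k := by
    intro k
    rw [hdd]; unfold extV
    split
    · exact (hdpos _).le
    · exact le_rfl
  -- positivity of the full Hermitian form
  have hpos : ∀ x : ℕ → ℂ, x (n+1) = 0 → 0 ≤ (BF (n+1) AAn x x).re := by
    intro x hx
    rw [hsplit, Complex.add_re]
    have h1 : 0 ≤ (BF (n+1) (extM S) x x).re := by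
      rw [BF_re]
      exact add_nonneg (QF_S_nonneg S hpd _) (QF_S_nonneg S hpd _)
    have h2 : 0 ≤ (BF (n+1) (RRe (n+1) dd) x x).re := by
      rw [hR_re x hx]
      exact Finset.sum_nonneg fun k _ => mul_nonneg (hddnn k) (Complex.normSq_nonneg _)
    linarith
  -- shift invariance of the Toeplitz part
  have hSshift : BF (n+1) (extM S) v v = BF (n+1) (extM S) u u :=
    BF_S_shift S htoep u v huge hv0 hvs
  -- the R part inequality
  have hRle : ∑ k ∈ range (n+1), dd k * Complex.normSq (u k - u (k+1))
      ≤ (∑ k ∈ range (n+1), dd k * Complex.normSq (v k - v (k+1)))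
        - dd 0 * Complex.normSq (u 0) := by
    rw [Finset.sum_range_succ' (fun k => dd k * Complex.normSq (v k - v (k+1))) n]
    rw [Finset.sum_range_succ (fun k => dd k * Complex.normSq (u k - u (k+1))) n]
    have hlast : dd n * Complex.normSq (u n - u (n+1)) = 0 := by
      rw [huge n le_rfl, huge (n+1) (by omega)]; simp
    rw [hlast, add_zero]
    have hfirst : dd 0 * Complex.normSq (v 0 - v (0+1)) = dd 0 * Complex.normSq (u 0) := by
      rw [hv0, hvs, zero_sub, Complex.normSq_neg]
    rw [hfirst]
    have hterm : ∀ k ∈ range n, dd k * Complex.normSq (u k - u (k+1))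
        ≤ dd (k+1) * Complex.normSq (v (k+1) - v (k+1+1)) := by
      intro k hk
      have hk' : k < n := Finset.mem_range.mp hk
      rw [hvs, hvs]
      refine mul_le_mul_of_nonneg_right ?_ (Complex.normSq_nonneg _)
      have h1 : k < n + 1 := by omega
      have h2 : k + 1 < n + 1 := by omega
      rw [hdd]; unfold extV
      rw [dif_pos h1, dif_pos h2]
      exact hdmono (by simp [Fin.le_def])
    have := Finset.sum_le_sum hterm
    linarith
  -- assemble the real inequalities
  have hbeta : (BF (n+1) AAn u u).re
      ≤ (BF (n+1) AAn v v).re - dd 0 * Complex.normSq (u 0) := by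
    rw [hsplit u u, hsplit v v, Complex.add_re, Complex.add_re,
      hR_re u (huge (n+1) (by omega)), hR_re v hvN, hSshift]
    linarith [hRle]
  have hquad : Complex.normSq z * (BF (n+1) AAn v v).re ≤ (BF (n+1) AAn u u).re := by
    have h := hpos (fun k => u k - z * v k) hx1
    rw [e5, Complex.sub_re] at h
    have h2 : (((Complex.normSq z : ℝ) : ℂ) * (starRingEnd ℂ) (BF (n+1) AAn v v)).re
        = Complex.normSq z * (BF (n+1) AAn v v).re := by
      simp [Complex.mul_re]
    linarith [h2 ▸ h]
  have halpha : 0 ≤ (BF (n+1) AAn v v).re := hpos v hvN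
  -- positivity of c * b 0
  have hcb : 0 < sb 0 * c := by
    have h1 : (BF (n+1) AAn sbc sbc).re = sb 0 * c := by
      rw [F2 sbc, hsbc]
      rw [Complex.conj_ofReal, ← Complex.ofReal_mul, Complex.ofReal_re]
    have hsbcN : sbc (n+1) = 0 := by rw [hsbc]; simp [hsbN]
    have h3 : 0 < (BF (n+1) AAn sbc sbc).re := by
      rw [hsplit, Complex.add_re]
      have hR : 0 ≤ (BF (n+1) (RRe (n+1) dd) sbc sbc).re := by
        rw [hR_re sbc hsbcN]
        exact Finset.sum_nonneg fun k _ => mul_nonneg (hddnn k) (Complex.normSq_nonneg _)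
      have hS : 0 < (BF (n+1) (extM S) sbc sbc).re := by
        rw [BF_re]
        have him : QF (n+1) (extM S) (fun k => ((sbc k).im)) = 0 := by
          simp [QF, hsbc]
        have hre : 0 < QF (n+1) (extM S) (fun k => ((sbc k).re)) := by
          apply QF_S_pos S hpd
          obtain ⟨i, hi⟩ := Function.ne_iff.mp hb
          refine ⟨(i : ℕ), i.isLt, ?_⟩
          simpa [hsbc, hsb_coe i] using hi
        rw [him]
        linarith
      linarith
    linarith [h1 ▸ h3]
  have hdd0 : 0 < dd 0 := by
    rw [hdd]; unfold extV
    rw [dif_pos (by omega : 0 < n+1)]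
    exact hdpos _
  have hsb0 : sb 0 ≠ 0 := by
    intro h
    rw [h, zero_mul] at hcb
    exact lt_irrefl 0 hcb
  have hnsq : 0 < Complex.normSq (u 0) := by
    rw [hu0]
    exact Complex.normSq_pos.mpr (by exact_mod_cast hsb0)
  -- conclude
  have hfin : Complex.normSq z < 1 := by
    by_contra hge
    push_neg at hge
    have h1 : 1 * (BF (n+1) AAn v v).re ≤ Complex.normSq z * (BF (n+1) AAn v v).re :=
      mul_le_mul_of_nonneg_right hge halpha
    nlinarith [mul_pos hdd0 hnsq]
  have habs := Complex.sq_norm z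
  nlinarith [norm_nonneg z, habs, hfin]
end

section
/- Let Σ = L Lᵀ be any square-root factorization of a positive definite (n+1)×(n+1) matrix Σ, and define Φ = √(N−n) Lᵀ and ṽ = (√(N−n)/b̃₀) L^{−1} e_1 for constants N > n and b̃₀ ≠ 0. Then the regularized least-squares solution b̂ = λ K Φᵀ (λ Φ K Φᵀ + I)^{−1} ṽ equals b̃₀^{−1} (Σ + ((N−n) λ K)^{−1})^{−1} e_1, and in particular does not depend on the choice of the square-root factor L. -/
open Matrix

private lemma posSemidef_smul_real {m : Type*} [Fintype m]
    {M : Matrix m m ℝ} (hM : M.PosSemidef) {μ : ℝ} (hμ : 0 ≤ μ) :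
    (μ • M).PosSemidef := by
  refine posSemidef_iff_dotProduct_mulVec.mpr ⟨?_, fun x => ?_⟩
  · unfold Matrix.IsHermitian
    rw [conjTranspose_smul, hM.1]
    simp
  · rw [smul_mulVec, dotProduct_smul, smul_eq_mul]
    exact mul_nonneg hμ (hM.dotProduct_mulVec_nonneg x)

/-- The kernel-based ME estimate does not depend on the square-root factor `L` of `S`. -/
theorem estimate_independent_of_sqrt_factor {n N : ℕ} (hNn : n < N)
    (S L : Matrix (Fin (n+1)) (Fin (n+1)) ℝ)
    (hS : S.PosDef) (hL : IsUnit L.det) (hfact : S = L * Lᵀ)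
    (K : Matrix (Fin (n+1)) (Fin (n+1)) ℝ) (hK : K.PosDef)
    (lam : ℝ) (hlam : 0 < lam)
    (b0 : ℝ) (hb0 : b0 ≠ 0) :
    let Φ : Matrix (Fin (n+1)) (Fin (n+1)) ℝ := Real.sqrt ((N : ℝ) - n) • Lᵀ
    let v : Fin (n+1) → ℝ :=
      (Real.sqrt ((N : ℝ) - n) / b0) • (L⁻¹ *ᵥ ((Pi.single (0 : Fin (n+1)) (1 : ℝ)) : Fin (n+1) → ℝ))
    (lam • (K * Φᵀ) * (lam • (Φ * K * Φᵀ) + 1)⁻¹) *ᵥ v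
      = b0⁻¹ • ((S + ((((N : ℝ) - n) * lam) • K)⁻¹)⁻¹
          *ᵥ ((Pi.single (0 : Fin (n+1)) (1 : ℝ)) : Fin (n+1) → ℝ)) := by
  intro Φ v
  set e1 : Fin (n+1) → ℝ := Pi.single (0 : Fin (n+1)) (1 : ℝ) with he1
  have hc : (0:ℝ) < (N : ℝ) - n := by
    have : (n : ℝ) < N := by exact_mod_cast hNn
    linarith
  set c : ℝ := (N : ℝ) - n with hcdef
  set s : ℝ := Real.sqrt c with hsdef
  have hs2 : s * s = c := Real.mul_self_sqrt hc.le
  set μ : ℝ := c * lam with hμdef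
  have hμ : 0 < μ := mul_pos hc hlam
  set A : Matrix (Fin (n+1)) (Fin (n+1)) ℝ := μ • (Lᵀ * K * L) + 1 with hAdef
  have hLKL : (Lᵀ * K * L).PosSemidef := by
    have := hK.posSemidef.conjTranspose_mul_mul_same L
    rwa [conjTranspose_eq_transpose_of_trivial] at this
  have hA : A.PosDef :=
    Matrix.PosDef.posSemidef_add (posSemidef_smul_real hLKL hμ.le) Matrix.PosDef.one
  have hμK : (μ • K).PosDef := by
    refine posDef_iff_dotProduct_mulVec.mpr ⟨?_, fun x hx => ?_⟩
    · unfold Matrix.IsHermitian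
      rw [conjTranspose_smul, hK.1]
      simp
    · rw [smul_mulVec, dotProduct_smul, smul_eq_mul]
      exact mul_pos hμ (hK.dotProduct_mulVec_pos hx)
  have hμKdet : IsUnit ((μ • K).det) := hμK.det_pos.ne'.isUnit
  have hAdet : IsUnit A.det := hA.det_pos.ne'.isUnit
  have hΦ : Φ = s • Lᵀ := rfl
  have hv : v = (s / b0) • (L⁻¹ *ᵥ e1) := rfl
  -- simplify the coefficient matrices
  have h1 : lam • (K * Φᵀ) = (lam * s) • (K * L) := by
    rw [hΦ, transpose_smul, transpose_transpose, mul_smul_comm, smul_smul]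
  have h2 : lam • (Φ * K * Φᵀ) = μ • (Lᵀ * K * L) := by
    rw [hΦ, transpose_smul, transpose_transpose, smul_mul_assoc, smul_mul_assoc,
      mul_smul_comm, smul_smul, smul_smul, hμdef, ← hs2]
    ring_nf
  -- key matrix identity
  have hstep : (S + (μ • K)⁻¹) * (μ • (K * L)) = L * A := by
    have hinv : (μ • K)⁻¹ * (μ • (K * L)) = L := by
      rw [show μ • (K * L) = (μ • K) * L from (smul_mul_assoc μ K L).symm,
        ← Matrix.mul_assoc, Matrix.nonsing_inv_mul _ hμKdet, Matrix.one_mul]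
    rw [Matrix.add_mul, hinv, hfact, hAdef]
    simp [Matrix.mul_add, Matrix.mul_assoc, mul_smul_comm]
  have hkey : (S + (μ • K)⁻¹) * (μ • (K * L * A⁻¹ * L⁻¹)) = 1 := by
    have : μ • (K * L * A⁻¹ * L⁻¹) = (μ • (K * L)) * A⁻¹ * L⁻¹ := by
      rw [smul_mul_assoc, smul_mul_assoc]
    rw [this, ← Matrix.mul_assoc, ← Matrix.mul_assoc, hstep,
      Matrix.mul_assoc L A A⁻¹, Matrix.mul_nonsing_inv _ hAdet, Matrix.mul_one,
      Matrix.mul_nonsing_inv _ hL]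
  have hBinv : (S + (μ • K)⁻¹)⁻¹ = μ • (K * L * A⁻¹ * L⁻¹) :=
    Matrix.inv_eq_right_inv hkey
  -- put everything together
  rw [h1, h2, ← hAdef, hv, hBinv]
  rw [mulVec_smul, mulVec_mulVec]
  rw [smul_mul_assoc, smul_mul_assoc, smul_mulVec, smul_smul,
    smul_mulVec, smul_smul]
  congr 1
  rw [hμdef, ← hs2]
  field_simp
end

section
/- Let Σ be a real symmetric positive definite Toeplitz (n+1)×(n+1) matrix and let a = Σ^{−1} e_1. If a ≠ 0 then a_0 = e_1ᵀ Σ^{−1} e_1 > 0 and all zeros of the polynomial a_0 z^n + a_1 z^{n−1} + … + a_n lie strictly inside the unit circle. -/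
open Matrix Complex Finset

namespace YWAux

noncomputable def qf {m : ℕ} (S : Matrix (Fin m) (Fin m) ℝ) (x y : Fin m → ℂ) : ℂ :=
  ∑ i, ∑ j, (starRingEnd ℂ) (x i) * (S i j : ℂ) * y j

lemma qf_conj {m : ℕ} (S : Matrix (Fin m) (Fin m) ℝ) (hs : ∀ i j, S i j = S j i)
    (x y : Fin m → ℂ) : (starRingEnd ℂ) (qf S x y) = qf S y x := by
  unfold qf
  rw [map_sum, Finset.sum_comm]
  refine Finset.sum_congr rfl fun j _ => ?_
  rw [map_sum]
  refine Finset.sum_congr rfl fun i _ => ?_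
  rw [_root_.map_mul, _root_.map_mul, Complex.conj_conj, Complex.conj_ofReal, hs j i]
  ring

lemma qf_sub_smul {m : ℕ} (S : Matrix (Fin m) (Fin m) ℝ) (x y w : Fin m → ℂ) (z : ℂ) :
    qf S x (fun k => y k - z * w k) = qf S x y - z * qf S x w := by
  unfold qf
  rw [Finset.mul_sum, ← Finset.sum_sub_distrib]
  refine Finset.sum_congr rfl fun i _ => ?_
  rw [Finset.mul_sum, ← Finset.sum_sub_distrib]
  exact Finset.sum_congr rfl fun j _ => by ring

lemma qf_pos {m : ℕ} (S : Matrix (Fin m) (Fin m) ℝ) (hpd : S.PosDef)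
    (hs : ∀ i j, S i j = S j i) (x : Fin m → ℂ) (hx : x ≠ 0) :
    ∃ r : ℝ, 0 < r ∧ qf S x x = (r : ℂ) := by
  set p : Fin m → ℝ := fun i => (x i).re with hp
  set q : Fin m → ℝ := fun i => (x i).im with hq
  have hform : ∀ y : Fin m → ℝ, star y ⬝ᵥ S *ᵥ y = ∑ i, ∑ j, S i j * (y i * y j) := by
    intro y
    simp only [dotProduct, mulVec, Pi.star_apply, star_trivial, Finset.mul_sum]
    exact Finset.sum_congr rfl fun i _ => Finset.sum_congr rfl fun j _ => by
      ring
  refine ⟨∑ i, ∑ j, S i j * (p i * p j) + ∑ i, ∑ j, S i j * (q i * q j), ?_, ?_⟩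
  · -- positivity
    have hpq : p ≠ 0 ∨ q ≠ 0 := by
      by_contra h
      push_neg at h
      apply hx
      funext i
      have h1 := congrFun h.1 i
      have h2 := congrFun h.2 i
      simp only [hp, hq, Pi.zero_apply] at h1 h2
      exact Complex.ext h1 h2
    have hpos : ∀ y : Fin m → ℝ, y ≠ 0 → 0 < ∑ i, ∑ j, S i j * (y i * y j) := by
      intro y hy; rw [← hform]; exact hpd.dotProduct_mulVec_pos hy
    have hnn : ∀ y : Fin m → ℝ, 0 ≤ ∑ i, ∑ j, S i j * (y i * y j) := by
      intro y; rw [← hform]; exact hpd.posSemidef.dotProduct_mulVec_nonneg y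
    rcases hpq with h | h
    · exact add_pos_of_pos_of_nonneg (hpos p h) (hnn q)
    · exact add_pos_of_nonneg_of_pos (hnn p) (hpos q h)
  · -- value
    have hterm : ∀ i j : Fin m, (starRingEnd ℂ) (x i) * (S i j : ℂ) * x j =
        ((S i j * (p i * p j + q i * q j) : ℝ) : ℂ)
          + ((S i j * (p i * q j - q i * p j) : ℝ) : ℂ) * I := by
      intro i j
      apply Complex.ext <;>
        simp [Complex.mul_re, Complex.mul_im, hp, hq] <;> ring
    have cross : ∑ i, ∑ j, S i j * (p i * q j - q i * p j) = 0 := by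
      have : ∑ i, ∑ j, S i j * (p i * q j) = ∑ i, ∑ j, S i j * (q i * p j) := by
        rw [Finset.sum_comm]
        exact Finset.sum_congr rfl fun j _ => Finset.sum_congr rfl fun i _ => by
          rw [hs j i]; ring
      simp only [mul_sub, Finset.sum_sub_distrib]
      rw [this, sub_self]
    unfold qf
    calc ∑ i, ∑ j, (starRingEnd ℂ) (x i) * (S i j : ℂ) * x j
        = ∑ i, ∑ j, (((S i j * (p i * p j + q i * q j) : ℝ) : ℂ)
            + ((S i j * (p i * q j - q i * p j) : ℝ) : ℂ) * I) :=
          Finset.sum_congr rfl fun i _ => Finset.sum_congr rfl fun j _ => hterm i j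
      _ = ((∑ i, ∑ j, S i j * (p i * p j + q i * q j) : ℝ) : ℂ)
            + ((∑ i, ∑ j, S i j * (p i * q j - q i * p j) : ℝ) : ℂ) * I := by
          push_cast
          simp [Finset.sum_add_distrib, Finset.sum_mul]
      _ = ((∑ i, ∑ j, S i j * (p i * p j) + ∑ i, ∑ j, S i j * (q i * q j) : ℝ) : ℂ) := by
          rw [cross]
          push_cast
          simp [mul_add, Finset.sum_add_distrib]

end YWAux

open Matrix YWAux

/-- The classical Stoica–Nehorai minimum-phase property of the Yule-Walker solution. -/
theorem yule_walker_min_phase {n : ℕ}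
    (S : Matrix (Fin (n+1)) (Fin (n+1)) ℝ)
    (hpd : S.PosDef) (hsymm : Sᵀ = S) (htoep : IsToeplitz S) :
    let a : Fin (n+1) → ℝ := S⁻¹ *ᵥ ((Pi.single (0 : Fin (n+1)) (1 : ℝ)) : Fin (n+1) → ℝ)
    a ≠ 0 →
      0 < a 0
      ∧ ∀ z : ℂ, (∑ k : Fin (n+1), (a k : ℂ) * z ^ (n - (k : ℕ))) = 0 → ‖z‖ < 1 := by
  intro a ha
  have hs : ∀ i j, S i j = S j i := by
    intro i j
    have := congrFun (congrFun hsymm j) i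
    rwa [Matrix.transpose_apply] at this
  have hdet : IsUnit S.det := hpd.det_pos.ne'.isUnit
  have he : ((Pi.single (0 : Fin (n+1)) (1 : ℝ)) : Fin (n+1) → ℝ) ≠ 0 := by
    intro h
    have := congrFun h 0
    simp at this
  have hSa : S *ᵥ a = ((Pi.single (0 : Fin (n+1)) (1 : ℝ)) : Fin (n+1) → ℝ) := by
    show S *ᵥ (S⁻¹ *ᵥ _) = _
    rw [Matrix.mulVec_mulVec, Matrix.mul_nonsing_inv _ hdet, Matrix.one_mulVec]
  have ha0 : 0 < a 0 := by
    have h := (hpd.inv).dotProduct_mulVec_pos he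
    have heq : star ((Pi.single (0 : Fin (n+1)) (1 : ℝ)) : Fin (n+1) → ℝ) ⬝ᵥ
        (S⁻¹ *ᵥ ((Pi.single (0 : Fin (n+1)) (1 : ℝ)) : Fin (n+1) → ℝ)) = a 0 := by
      simp [dotProduct, Pi.single_apply, a]
    rwa [heq] at h
  refine ⟨ha0, ?_⟩
  intro z hz
  rcases Nat.eq_zero_or_pos n with hn | hn
  · exfalso
    subst hn
    rw [Fin.sum_univ_one] at hz
    simp at hz
    exact ha0.ne' hz
  -- complexified vectors
  set ac : Fin (n+1) → ℂ := fun k => (a k : ℂ) with hac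
  have hqac : ∀ x : Fin (n+1) → ℂ, qf S x ac = (starRingEnd ℂ) (x 0) := by
    intro x
    unfold qf
    have hrow : ∀ i, ∑ j, (starRingEnd ℂ) (x i) * (S i j : ℂ) * ac j
        = (starRingEnd ℂ) (x i) * ((((Pi.single (0 : Fin (n+1)) (1 : ℝ)) : Fin (n+1) → ℝ) i : ℝ) : ℂ) := by
      intro i
      have h1 : ((S *ᵥ a) i : ℂ) = ((((Pi.single (0 : Fin (n+1)) (1 : ℝ)) : Fin (n+1) → ℝ) i : ℝ) : ℂ) := by
        rw [hSa]
      have h2 : ((S *ᵥ a) i : ℂ) = ∑ j, (S i j : ℂ) * ac j := by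
        simp only [mulVec, dotProduct, hac]
        push_cast
        rfl
      rw [← h1, h2, Finset.mul_sum]
      exact Finset.sum_congr rfl fun j _ => by ring
    rw [Finset.sum_congr rfl fun i _ => hrow i]
    rw [Finset.sum_eq_single 0]
    · simp
    · intro i _ hi
      simp [Pi.single_apply, hi]
    · simp
  -- the deflated polynomial coefficients
  set b : Fin (n+1) → ℂ := fun j =>
    ∑ i : Fin (n+1), if (i : ℕ) ≤ (j : ℕ) then ac i * z ^ ((j : ℕ) - (i : ℕ)) else 0 with hbdef
  have hb0 : b 0 = ac 0 := by
    rw [hbdef]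
    simp only
    rw [Finset.sum_eq_single 0]
    · simp
    · intro i _ hi
      have h0 : ¬((i : ℕ) ≤ ((0 : Fin (n+1)) : ℕ)) := by
        simp only [Fin.val_zero, Nat.le_zero]
        exact fun h => hi (Fin.ext h)
      rw [if_neg h0]
    · simp
  have hrec : ∀ j : Fin n, b j.succ = ac j.succ + z * b j.castSucc := by
    intro j
    have key : b j.succ - z * b j.castSucc = ac j.succ := by
      rw [hbdef]
      simp only
      rw [Finset.mul_sum, ← Finset.sum_sub_distrib]
      rw [Finset.sum_eq_single j.succ]
      · have h1 : ((j.succ : Fin (n+1)) : ℕ) ≤ ((j.succ : Fin (n+1)) : ℕ) := le_refl _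
        have h2 : ¬(((j.succ : Fin (n+1)) : ℕ) ≤ ((j.castSucc : Fin (n+1)) : ℕ)) := by
          simp [Fin.val_succ, Fin.coe_castSucc]
        simp [h1, h2]
      · intro i _ hi
        have hine : (i : ℕ) ≠ ((j.succ : Fin (n+1)) : ℕ) := fun h => hi (Fin.ext h)
        simp only [Fin.val_succ, Fin.coe_castSucc] at hine ⊢
        by_cases hij : (i : ℕ) ≤ (j : ℕ)
        · have hij' : (i : ℕ) ≤ (j : ℕ) + 1 := by omega
          rw [if_pos hij, if_pos hij']
          have hsub : (j : ℕ) + 1 - (i : ℕ) = ((j : ℕ) - (i : ℕ)) + 1 := by omega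
          rw [hsub, pow_succ]
          ring
        · have hij' : ¬((i : ℕ) ≤ (j : ℕ) + 1) := by omega
          rw [if_neg hij, if_neg hij']
          simp
      · simp
    linear_combination key
  have hbn : b (Fin.last n) = 0 := by
    rw [hbdef]
    simp only
    rw [← hz]
    refine Finset.sum_congr rfl fun i _ => ?_
    have hle : (i : ℕ) ≤ ((Fin.last n : Fin (n+1)) : ℕ) := Fin.is_le i
    rw [if_pos hle]
    simp [hac, Fin.val_last]
  -- the shifted vector
  set v : Fin (n+1) → ℂ := Fin.cases (motive := fun _ => ℂ) 0 (fun i => b i.castSucc) with hvdef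
  have hv0 : v 0 = 0 := rfl
  have hvs : ∀ i : Fin n, v i.succ = b i.castSucc := fun i => by
    rw [hvdef]; exact Fin.cases_succ i
  have hacv : ac = fun k => b k - z * v k := by
    funext k
    induction k using Fin.cases with
    | zero => rw [hv0, hb0]; ring
    | succ i => rw [hvs i, hrec i]; ring
  -- v is nonzero
  let i0 : Fin n := ⟨0, hn⟩
  have hi0cast : (i0.castSucc : Fin (n+1)) = 0 := by
    apply Fin.ext
    rfl
  have hvne : v ≠ 0 := by
    intro h
    have := congrFun h i0.succ
    rw [hvs i0, hi0cast, hb0] at this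
    simp only [Pi.zero_apply, hac] at this
    exact ha0.ne' (by exact_mod_cast this)
  obtain ⟨r, hr, hvv⟩ := qf_pos S hpd hs v hvne
  -- key quadratic form relations
  have h1 : qf S v b - z * qf S v v = 0 := by
    rw [← qf_sub_smul, ← hacv, hqac v, hv0, map_zero]
  have h2 : qf S b b - z * qf S b v = (a 0 : ℂ) := by
    rw [← qf_sub_smul, ← hacv, hqac b, hb0]
    simp [hac, Complex.conj_ofReal]
  -- shift identity
  have hT : ∀ i j : Fin n, S i.castSucc j.castSucc = S i.succ j.succ := by
    intro i j
    apply htoep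
    simp only [Fin.coe_castSucc, Fin.val_succ]
    push_cast
    ring
  have h3 : qf S b b = qf S v v := by
    unfold qf
    rw [Fin.sum_univ_castSucc (f := fun i => ∑ j, (starRingEnd ℂ) (b i) * (S i j : ℂ) * b j)]
    rw [Fin.sum_univ_succ (f := fun i => ∑ j, (starRingEnd ℂ) (v i) * (S i j : ℂ) * v j)]
    have hlast : ∑ j, (starRingEnd ℂ) (b (Fin.last n)) * (S (Fin.last n) j : ℂ) * b j = 0 := by
      simp [hbn]
    have hzero : ∑ j, (starRingEnd ℂ) (v 0) * (S 0 j : ℂ) * v j = 0 := by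
      simp [hv0]
    rw [hlast, hzero, add_zero, zero_add]
    refine Finset.sum_congr rfl fun i _ => ?_
    rw [Fin.sum_univ_castSucc
      (f := fun j => (starRingEnd ℂ) (b i.castSucc) * (S i.castSucc j : ℂ) * b j)]
    rw [Fin.sum_univ_succ
      (f := fun j => (starRingEnd ℂ) (v i.succ) * (S i.succ j : ℂ) * v j)]
    rw [hbn, hv0]
    simp only [mul_zero, add_zero, zero_add]
    refine Finset.sum_congr rfl fun j _ => ?_
    rw [hvs i, hvs j, hT i j]
  -- conclude
  have h4 : qf S v b = z * (r : ℂ) := by rw [← hvv]; linear_combination h1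
  have h5 : qf S b v = (starRingEnd ℂ) z * (r : ℂ) := by
    rw [← qf_conj S hs v b, h4, _root_.map_mul, Complex.conj_ofReal]
  have h6 : ((r : ℂ)) - z * ((starRingEnd ℂ) z * (r : ℂ)) = (a 0 : ℂ) := by
    rw [← h5, ← hvv, ← h3]
    linear_combination h2
  have h7 : (a 0 : ℂ) = ((r - Complex.normSq z * r : ℝ) : ℂ) := by
    rw [← h6, ← mul_assoc, Complex.mul_conj]
    push_cast
    ring
  have h8 : a 0 = r - Complex.normSq z * r := by exact_mod_cast h7
  have h9 : Complex.normSq z < 1 := by nlinarith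
  have h10 : ‖z‖ ^ 2 < 1 := by rw [Complex.sq_norm]; exact h9
  nlinarith [norm_nonneg z]
end
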